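/- arXiv:1910.02816 — 3 statements merged into one kernel-verified Lean document; each statement's English description precedes it below -/
import Mathlib

section
/- Let C ⊆ [n] and S ⊆ [n]. The rank function r_C of the Schubert matroid SM_n(C) satisfies r_C(S) = max{|F| : F a column-strict flagged filling of C with values in S}, where |F| is the number of filled boxes. -/
open scoped Classical

/-- Domination order: `T ≤ C` iff equal cardinality and the `i`-th smallest
element of `T` is at most the `i`-th smallest element of `C`. -/
def SchubertDom {n : ℕ} (T C : Finset (Fin n)) : Prop :=
  List.Forall₂ (· ≤ ·) (T.sort (· ≤ ·)) (C.sort (· ≤ ·))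

/-- The rank function of the Schubert matroid `SM_n(C)`:
`r_C(S) = max{#(S ∩ B) : B ≤ C}`. -/
noncomputable def schubertRank {n : ℕ} (C S : Finset (Fin n)) : ℕ :=
  ((Finset.univ : Finset (Finset (Fin n))).filter (fun B => SchubertDom B C)).sup
    (fun B => (S ∩ B).card)

set_option linter.unnecessarySimpa false

-- L1: an order-decreasing injective relabeling of C gives a dominated set
lemma dom_of_map {n : ℕ} (C : Finset (Fin n)) (h : Fin n → Fin n)
    (hinj : Set.InjOn h C) (hle : ∀ c ∈ C, h c ≤ c) :
    SchubertDom (C.image h) C := by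
  classical
  set B := C.image h with hBdef
  have hcard : B.card = C.card := Finset.card_image_of_injOn hinj
  unfold SchubertDom
  rw [List.forall₂_iff_get]
  have hlenB : (B.sort (· ≤ ·)).length = B.card := Finset.length_sort _
  have hlenC : (C.sort (· ≤ ·)).length = C.card := Finset.length_sort _
  refine ⟨by rw [hlenB, hlenC, hcard], ?_⟩
  intro i h₁ h₂
  by_contra hcon
  push_neg at hcon
  set lB := B.sort (· ≤ ·) with hlB
  set lC := C.sort (· ≤ ·) with hlC
  set x : Fin n := lC.get ⟨i, h₂⟩ with hx
  -- Step A : i+1 ≤ #(C.filter (· ≤ x))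
  have hA : i + 1 ≤ (C.filter (· ≤ x)).card := by
    have hnd : (lC.take (i+1)).Nodup := (C.sort_nodup (· ≤ ·)).sublist (List.take_sublist _ _)
    have hsub : (lC.take (i+1)).toFinset ⊆ C.filter (· ≤ x) := by
      intro y hy
      rw [List.mem_toFinset] at hy
      obtain ⟨j, hj, hjy⟩ := List.mem_iff_getElem.1 hy
      have hjlt : j < i + 1 := lt_of_lt_of_le hj (by simpa using List.length_take_le (i+1) lC)
      have hjC : j < lC.length := lt_of_lt_of_le hj (by
        rw [List.length_take]; exact min_le_right _ _)
      have hyget : lC[j] = y := by rw [← hjy, List.getElem_take]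
      rw [Finset.mem_filter]
      constructor
      · rw [← Finset.mem_sort (α := Fin n) (· ≤ ·), ← hlC, ← hyget]
        exact List.getElem_mem hjC
      · rw [← hyget, hx]
        exact (C.pairwise_sort (· ≤ ·)).rel_get_of_le (by exact Fin.mk_le_mk.mpr (by omega))
    have := Finset.card_le_card hsub
    rwa [List.toFinset_card_of_nodup hnd, List.length_take, min_eq_left (by omega)] at this
  -- Step B : #(B.filter (· ≤ x)) ≤ i
  have hB : (B.filter (· ≤ x)).card ≤ i := by
    have hsub : B.filter (· ≤ x) ⊆ (lB.take i).toFinset := by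
      intro y hy
      rw [Finset.mem_filter] at hy
      obtain ⟨hyB, hyx⟩ := hy
      have hymem : y ∈ lB := by rw [hlB, Finset.mem_sort]; exact hyB
      obtain ⟨j, hj, hjy⟩ := List.mem_iff_getElem.1 hymem
      have hji : j < i := by
        by_contra hji
        push_neg at hji
        have : lB.get ⟨i, h₁⟩ ≤ lB[j] :=
          (B.pairwise_sort (· ≤ ·)).rel_get_of_le (by exact Fin.mk_le_mk.mpr hji)
        rw [hjy] at this
        exact absurd (lt_of_le_of_lt (this.trans hyx) hcon) (lt_irrefl _)
      rw [List.mem_toFinset]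
      rw [← hjy]
      exact List.mem_take_iff_getElem.mpr ⟨j, by omega, rfl⟩
    calc (B.filter (· ≤ x)).card ≤ (lB.take i).toFinset.card := Finset.card_le_card hsub
      _ ≤ (lB.take i).length := List.toFinset_card_le _
      _ ≤ i := List.length_take_le _ _
  -- Step C : injection
  have hC : (C.filter (· ≤ x)).card ≤ (B.filter (· ≤ x)).card := by
    apply Finset.card_le_card_of_injOn h
    · intro c hc
      rw [Finset.mem_coe, Finset.mem_filter] at hc ⊢
      exact ⟨Finset.mem_image_of_mem h hc.1, le_trans (hle c hc.1) hc.2⟩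
    · exact hinj.mono (by intro c hc; exact (Finset.mem_filter.1 hc).1)
  omega

-- L2: extend a partial flagged filling to a full injective flagged map on C
lemma extend_filling {n : ℕ} : ∀ (C R : Finset (Fin n)) (F : Fin n → Fin n),
    R ⊆ C → Set.InjOn F R → (∀ i ∈ R, F i ≤ i) →
    ∃ h : Fin n → Fin n, Set.InjOn h C ∧ (∀ c ∈ C, h c ≤ c) ∧ ∀ i ∈ R, F i ∈ C.image h := by
  intro C
  induction C using Finset.strongInduction with
  | _ C ih =>
    intro R F hRC hFinj hFle
    rcases C.eq_empty_or_nonempty with rfl | hne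
    · have hR : R = ∅ := Finset.subset_empty.1 hRC
      subst hR
      exact ⟨id, by simp [Set.InjOn], by simp, by simp⟩
    · set c := C.max' hne with hc
      have hcC : c ∈ C := C.max'_mem hne
      set C' := C.erase c with hC'def
      have hC'ss : C' ⊂ C := Finset.erase_ssubset hcC
      set R' := R.erase c with hR'def
      have hR'C' : R' ⊆ C' := by
        intro i hi
        rw [Finset.mem_erase] at hi ⊢
        exact ⟨hi.1, hRC hi.2⟩
      obtain ⟨h', hinj', hle', hmem'⟩ := ih C' hC'ss R' F hR'C'
        (hFinj.mono (Finset.coe_subset.2 (Finset.erase_subset _ _)))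
        (fun i hi => hFle i (Finset.mem_erase.1 hi).2)
      set img := C'.image h' with himg
      have hCIic : C ⊆ Finset.Iic c := fun y hy => Finset.mem_Iic.2 (C.le_max' y hy)
      have hnotsub : ¬ (Finset.Iic c ⊆ img) := by
        intro hs
        have h1 : (Finset.Iic c).card ≤ img.card := Finset.card_le_card hs
        have h2 : img.card = C'.card := Finset.card_image_of_injOn hinj'
        have h3 : C'.card = C.card - 1 := Finset.card_erase_of_mem hcC
        have h4 : C.card ≤ (Finset.Iic c).card := Finset.card_le_card hCIic
        have h5 : 0 < C.card := Finset.card_pos.2 hne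
        omega
      obtain ⟨w₀, hw₀Iic, hw₀⟩ := Finset.not_subset.1 hnotsub
      set w : Fin n := if c ∈ R ∧ F c ∉ img then F c else w₀ with hw
      have hwle : w ≤ c := by
        rw [hw]; split_ifs with hcase
        · exact hFle c hcase.1
        · exact Finset.mem_Iic.1 hw₀Iic
      have hwimg : w ∉ img := by
        rw [hw]; split_ifs with hcase
        · exact hcase.2
        · exact hw₀
      refine ⟨fun x => if x = c then w else h' x, ?_, ?_, ?_⟩
      · intro a ha b hb hab
        simp only at hab
        by_cases hac : a = c <;> by_cases hbc : b = c
        · rw [hac, hbc]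
        · exfalso
          rw [if_pos hac, if_neg hbc] at hab
          exact hwimg (hab ▸ Finset.mem_image_of_mem h' (Finset.mem_erase.2 ⟨hbc, hb⟩))
        · exfalso
          rw [if_neg hac, if_pos hbc] at hab
          exact hwimg (hab ▸ Finset.mem_image_of_mem h' (Finset.mem_erase.2 ⟨hac, ha⟩))
        · rw [if_neg hac, if_neg hbc] at hab
          exact hinj' (Finset.mem_coe.2 (Finset.mem_erase.2 ⟨hac, ha⟩))
            (Finset.mem_coe.2 (Finset.mem_erase.2 ⟨hbc, hb⟩)) hab
      · intro x hx
        by_cases hxc : x = c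
        · simp only [if_pos hxc]; exact hxc ▸ hwle
        · simp only [if_neg hxc]; exact hle' x (Finset.mem_erase.2 ⟨hxc, hx⟩)
      · intro i hi
        by_cases hic : i = c
        · by_cases hFc : F i ∈ img
          · obtain ⟨b, hb, hbF⟩ := Finset.mem_image.1 hFc
            have hbc : b ≠ c := (Finset.mem_erase.1 hb).1
            refine Finset.mem_image.2 ⟨b, (Finset.mem_erase.1 hb).2, ?_⟩
            rw [if_neg hbc]; exact hbF
          · have hwFi : w = F i := by
              rw [hw, if_pos ⟨hic ▸ hi, hic ▸ hFc⟩, hic]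
            refine Finset.mem_image.2 ⟨c, hcC, ?_⟩
            rw [if_pos rfl]; exact hwFi
        · have := hmem' i (Finset.mem_erase.2 ⟨hic, hi⟩)
          obtain ⟨b, hb, hbF⟩ := Finset.mem_image.1 this
          have hbc : b ≠ c := (Finset.mem_erase.1 hb).1
          refine Finset.mem_image.2 ⟨b, (Finset.mem_erase.1 hb).2, ?_⟩
          rw [if_neg hbc]; exact hbF

-- D : a dominated set arises from an order-decreasing injective relabeling
lemma map_of_dom {n : ℕ} {B C : Finset (Fin n)} (hdom : SchubertDom B C) :
    ∃ G : Fin n → Fin n, Set.InjOn G C ∧ (∀ c ∈ C, G c ≤ c) ∧ C.image G = B := by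
  classical
  set lB := B.sort (· ≤ ·) with hlB
  set lC := C.sort (· ≤ ·) with hlC
  obtain ⟨hlen, hget⟩ := List.forall₂_iff_get.1 hdom
  set G : Fin n → Fin n := fun x => lB.getD (lC.idxOf x) x with hG
  have hidx : ∀ c ∈ C, lC.idxOf c < lC.length := by
    intro c hcC
    exact List.idxOf_lt_length_iff.2 (by rw [hlC, Finset.mem_sort]; exact hcC)
  have hjB : ∀ c ∈ C, lC.idxOf c < lB.length := by
    intro c hcC
    have h1 : lB.length = lC.length := hlen
    rw [h1]; exact hidx c hcC
  have hGval : ∀ c (hcC : c ∈ C), G c = lB[lC.idxOf c]'(hjB c hcC) := by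
    intro c hcC
    rw [hG]
    exact List.getD_eq_getElem _ _ (hjB c hcC)
  have hinj : Set.InjOn G C := by
    intro a ha b hb hab
    have ha' := Finset.mem_coe.1 ha
    have hb' := Finset.mem_coe.1 hb
    rw [hGval a ha', hGval b hb'] at hab
    have hij : lC.idxOf a = lC.idxOf b :=
      (B.sort_nodup (· ≤ ·)).getElem_inj_iff.1 hab
    have h1 : lC[lC.idxOf a]'(hidx a ha') = a := List.getElem_idxOf (hidx a ha')
    have h2 : lC[lC.idxOf b]'(hidx b hb') = b := List.getElem_idxOf (hidx b hb')
    rw [← h1, ← h2]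
    congr 1
  refine ⟨G, hinj, ?_, ?_⟩
  · intro c hcC
    rw [hGval c hcC]
    have h2 : lB[lC.idxOf c]'(hjB c hcC) ≤ lC[lC.idxOf c]'(hidx c hcC) := by
      have := hget (lC.idxOf c) (hjB c hcC) (hidx c hcC)
      exact this
    have h1 : lC[lC.idxOf c]'(hidx c hcC) = c := List.getElem_idxOf (hidx c hcC)
    calc lB[lC.idxOf c]'(hjB c hcC) ≤ lC[lC.idxOf c]'(hidx c hcC) := h2
      _ = c := h1
  · apply Finset.eq_of_subset_of_card_le
    · intro y hy
      obtain ⟨cc, hcc, hccy⟩ := Finset.mem_image.1 hy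
      rw [hGval cc hcc] at hccy
      rw [← Finset.mem_sort (α := Fin n) (· ≤ ·), ← hlB, ← hccy]
      exact List.getElem_mem _
    · have hc1 : (C.image G).card = C.card := Finset.card_image_of_injOn hinj
      rw [hc1]
      have hc2 : B.card = C.card := by
        have e1 : lB.length = B.card := Finset.length_sort _
        have e2 : lC.length = C.card := Finset.length_sort _
        have e3 : lB.length = lC.length := hlen
        omega
      omega

/-- The rank `r_C(S)` of `S` in the Schubert matroid `SM_n(C)` equals the maximal
number of filled boxes of a column-strict flagged filling of the column `C`
with values in `S`. -/
theorem schubertRank_eq_max_filling (n : ℕ) (C S : Finset (Fin n)) :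
    schubertRank C S =
      ((Finset.univ : Finset (Finset (Fin n))).filter
        (fun R => R ⊆ C ∧ ∃ F : Fin n → Fin n,
          Set.InjOn F R ∧ (∀ i ∈ R, F i ∈ S) ∧ (∀ i ∈ R, F i ≤ i))).sup
        Finset.card := by
  classical
  apply le_antisymm
  · apply Finset.sup_le
    intro B hB
    have hdom : SchubertDom B C := (Finset.mem_filter.1 hB).2
    obtain ⟨G, hGinj, hGle, hGim⟩ := map_of_dom hdom
    set R : Finset (Fin n) := C.filter (fun c => G c ∈ S) with hRdef
    have hRC : R ⊆ C := Finset.filter_subset _ _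
    have hRmem : R ∈ (Finset.univ : Finset (Finset (Fin n))).filter
        (fun R => R ⊆ C ∧ ∃ F : Fin n → Fin n,
          Set.InjOn F R ∧ (∀ i ∈ R, F i ∈ S) ∧ (∀ i ∈ R, F i ≤ i)) := by
      refine Finset.mem_filter.2 ⟨Finset.mem_univ _, hRC, G, ?_, ?_, ?_⟩
      · exact hGinj.mono (Finset.coe_subset.2 hRC)
      · intro i hi; exact (Finset.mem_filter.1 hi).2
      · intro i hi; exact hGle i (hRC hi)
    have hcard : (S ∩ B).card = R.card := by
      have himg : R.image G = S ∩ B := by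
        apply Finset.Subset.antisymm
        · intro y hy
          obtain ⟨c, hc, hcy⟩ := Finset.mem_image.1 hy
          rw [Finset.mem_inter]
          obtain ⟨hcC, hcS⟩ := Finset.mem_filter.1 hc
          exact ⟨hcy ▸ hcS, hcy ▸ (hGim ▸ Finset.mem_image_of_mem G hcC)⟩
        · intro y hy
          obtain ⟨hyS, hyB⟩ := Finset.mem_inter.1 hy
          rw [← hGim] at hyB
          obtain ⟨c, hcC, hcy⟩ := Finset.mem_image.1 hyB
          exact Finset.mem_image.2 ⟨c, Finset.mem_filter.2 ⟨hcC, hcy ▸ hyS⟩, hcy⟩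
      rw [← himg, Finset.card_image_of_injOn
        (hGinj.mono (Finset.coe_subset.2 hRC))]
    rw [hcard]
    exact Finset.le_sup hRmem
  · apply Finset.sup_le
    intro R hR
    obtain ⟨_, hRC, F, hFinj, hFS, hFle⟩ := Finset.mem_filter.1 hR |>.imp id id
    obtain ⟨h, hinj, hle, hmem⟩ := extend_filling C R F hRC hFinj hFle
    set B := C.image h with hBdef
    have hBmem : B ∈ (Finset.univ : Finset (Finset (Fin n))).filter
        (fun B => SchubertDom B C) :=
      Finset.mem_filter.2 ⟨Finset.mem_univ _, dom_of_map C h hinj hle⟩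
    have hcard : R.card ≤ (S ∩ B).card := by
      apply Finset.card_le_card_of_injOn F
      · intro i hi
        exact Finset.mem_inter.2 ⟨hFS i hi, hmem i hi⟩
      · exact hFinj
    exact le_trans hcard (Finset.le_sup (f := fun B => (S ∩ B).card) hBmem)
end

section
/- Let C ⊆ [n], S ⊆ [n] with #S = k, and let π = π_1 ⋯ π_k be any ordering of the elements of S. Construct a filling F_π(C) greedily: for t = 1 to k, place π_t into the topmost (smallest-index) unfilled row i ∈ C with i ≥ π_t, skipping π_t if no such row exists. Then the number of filled rows |F_π(C)| equals r_C(S), the rank of S in the Schubert matroid SM_n(C). In particular |F_π(C)| is independent of the chosen ordering π. -/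
open scoped Classical

/-- One greedy step: place the value `v` into the topmost unfilled row `i ∈ C`
with `i ≥ v`, if any. -/
noncomputable def greedyStep {n : ℕ} (C : Finset (Fin n)) (filled : Finset (Fin n))
    (v : Fin n) : Finset (Fin n) :=
  let avail := (C \ filled).filter (fun i => v ≤ i)
  if h : avail.Nonempty then insert (avail.min' h) filled else filled

lemma greedyStep_subset (C F : Finset (Fin n)) (v : Fin n) : F ⊆ greedyStep C F v := by
  unfold greedyStep
  dsimp only
  split
  · exact Finset.subset_insert _ _
  · exact Finset.Subset.refl _

lemma greedyStep_subset_union (C F : Finset (Fin n)) (v : Fin n) :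
    greedyStep C F v ⊆ C ∪ F := by
  unfold greedyStep
  dsimp only
  split
  · next h =>
    intro x hx
    rcases Finset.mem_insert.1 hx with rfl | hx
    · have := Finset.min'_mem _ h
      simp only [Finset.mem_filter, Finset.mem_sdiff] at this
      exact Finset.mem_union_left _ this.1.1
    · exact Finset.mem_union_right _ hx
  · exact Finset.subset_union_right

lemma foldl_greedy_subset (C : Finset (Fin n)) :
    ∀ (π : List (Fin n)) (F : Finset (Fin n)), F ⊆ π.foldl (greedyStep C) F := by
  intro π
  induction π with
  | nil => intro F; exact Finset.Subset.refl _
  | cons v rest ih =>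
    intro F
    exact (greedyStep_subset C F v).trans (ih _)

lemma foldl_greedy_subset_union (C : Finset (Fin n)) :
    ∀ (π : List (Fin n)) (F : Finset (Fin n)), π.foldl (greedyStep C) F ⊆ C ∪ F := by
  intro π
  induction π with
  | nil => intro F; exact Finset.subset_union_right
  | cons v rest ih =>
    intro F
    refine (ih (greedyStep C F v)).trans ?_
    intro x hx
    rcases Finset.mem_union.1 hx with hx | hx
    · exact Finset.mem_union_left _ hx
    · exact greedyStep_subset_union C F v hx
lemma forall₂_countP_le {l₁ l₂ : List (Fin n)} (h : List.Forall₂ (· ≤ ·) l₁ l₂) (t : Fin n) :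
    l₁.countP (fun x => decide (t ≤ x)) ≤ l₂.countP (fun x => decide (t ≤ x)) := by
  induction h with
  | nil => simp
  | cons hab _ ih =>
    rename_i a b l₁' l₂' _
    simp only [List.countP_cons]
    by_cases ht : t ≤ a
    · have : t ≤ b := ht.trans hab
      simp [ht, this]
      omega
    · simp only [ht, decide_eq_false]
      by_cases ht2 : t ≤ b <;> simp [ht2] <;> omega

lemma sorted_forall₂ : ∀ (l₁ l₂ : List (Fin n)), l₁.Pairwise (· ≤ ·) → l₂.Pairwise (· ≤ ·) →
    l₁.length = l₂.length →
    (∀ t : Fin n, l₁.countP (fun x => decide (t ≤ x)) ≤ l₂.countP (fun x => decide (t ≤ x))) →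
    List.Forall₂ (· ≤ ·) l₁ l₂ := by
  intro l₁
  induction l₁ with
  | nil =>
    intro l₂ _ _ hlen _
    cases l₂ with
    | nil => exact List.Forall₂.nil
    | cons b t₂ => simp at hlen
  | cons a t₁ ih =>
    intro l₂ hs₁ hs₂ hlen hcount
    cases l₂ with
    | nil => simp at hlen
    | cons b t₂ =>
      have hab : a ≤ b := by
        by_contra hab
        push_neg at hab
        have h1 : (a :: t₁).countP (fun x => decide (a ≤ x)) = t₁.length + 1 := by
          rw [List.countP_eq_length.2]
          · simp
          · intro x hx
            rcases List.mem_cons.1 hx with rfl | hx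
            · simp
            · simpa using (List.pairwise_cons.1 hs₁).1 x hx
        have h2 : (b :: t₂).countP (fun x => decide (a ≤ x)) ≤ t₂.length := by
          simp only [List.countP_cons]
          have : ¬ (a ≤ b) := not_le.2 hab
          simp [this]
          exact List.countP_le_length
        have := hcount a
        rw [h1] at this
        simp only [List.length_cons] at hlen
        omega
      refine List.Forall₂.cons hab (ih t₂ (List.pairwise_cons.1 hs₁).2 (List.pairwise_cons.1 hs₂).2
        (by simpa using hlen) ?_)
      intro t
      by_cases htb : t ≤ b
      · have : t₂.countP (fun x => decide (t ≤ x)) = t₂.length := by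
          rw [List.countP_eq_length.2]
          intro x hx
          exact decide_eq_true (htb.trans ((List.pairwise_cons.1 hs₂).1 x hx))
        rw [this]
        simp only [List.length_cons] at hlen
        calc t₁.countP (fun x => decide (t ≤ x)) ≤ t₁.length := List.countP_le_length
          _ = t₂.length := by omega
      · have h2 : (b :: t₂).countP (fun x => decide (t ≤ x)) = t₂.countP (fun x => decide (t ≤ x)) := by
          simp [List.countP_cons, htb]
        have h1 : t₁.countP (fun x => decide (t ≤ x)) ≤ (a :: t₁).countP (fun x => decide (t ≤ x)) := by
          simp only [List.countP_cons]
          omega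
        have := hcount t
        omega

lemma card_filter_eq_countP_sort (B : Finset (Fin n)) (t : Fin n) :
    (B.filter (fun x => t ≤ x)).card = (B.sort (· ≤ ·)).countP (fun x => decide (t ≤ x)) := by
  rw [(Finset.sort_perm_toList B (· ≤ ·)).countP_eq]
  have h1 : (B.filter (fun x => t ≤ x)).card = Multiset.countP (fun x => t ≤ x) B.val := by
    rw [Finset.card_def, Finset.filter_val, Multiset.countP_eq_card_filter]
  rw [h1, ← Finset.coe_toList B, Multiset.coe_countP]
lemma forall₂_matching : ∀ {l₁ l₂ : List (Fin n)}, List.Forall₂ (· ≤ ·) l₁ l₂ →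
    l₁.Nodup → l₂.Nodup →
    ∃ g : Fin n → Fin n, Set.InjOn g ↑l₁.toFinset ∧
      ∀ x ∈ l₁.toFinset, x ≤ g x ∧ g x ∈ l₂.toFinset := by
  intro l₁ l₂ h
  induction h with
  | nil =>
    intro _ _
    exact ⟨id, by simp [Set.InjOn], by simp⟩
  | cons hab htl ih =>
    rename_i a b t₁ t₂
    intro hnd₁ hnd₂
    obtain ⟨g, hinj, hg⟩ := ih (List.nodup_cons.1 hnd₁).2 (List.nodup_cons.1 hnd₂).2
    have ha : a ∉ t₁.toFinset := by
      simp only [List.mem_toFinset]; exact (List.nodup_cons.1 hnd₁).1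
    have hb : b ∉ t₂.toFinset := by
      simp only [List.mem_toFinset]; exact (List.nodup_cons.1 hnd₂).1
    refine ⟨Function.update g a b, ?_, ?_⟩
    · intro x hx y hy hxy
      simp only [Finset.coe_insert, Set.mem_insert_iff, List.toFinset_cons,
        Finset.mem_coe, Finset.mem_insert] at hx hy
      rcases hx with rfl | hx <;> rcases hy with rfl | hy
      · rfl
      · exfalso
        rw [Function.update_self, Function.update_of_ne (by rintro rfl; exact ha hy)] at hxy
        exact hb (hxy ▸ (hg y hy).2)
      · exfalso
        rw [Function.update_self, Function.update_of_ne (by rintro rfl; exact ha hx)] at hxy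
        exact hb (hxy ▸ (hg x hx).2)
      · rw [Function.update_of_ne (by rintro rfl; exact ha hx),
          Function.update_of_ne (by rintro rfl; exact ha hy)] at hxy
        exact hinj (by simpa using hx) (by simpa using hy) hxy
    · intro x hx
      simp only [List.toFinset_cons, Finset.mem_insert] at hx
      rcases hx with rfl | hx
      · rw [Function.update_self]
        exact ⟨hab, by simp⟩
      · rw [Function.update_of_ne (by rintro rfl; exact ha hx)]
        exact ⟨(hg x hx).1, by simp [List.mem_toFinset.1 (hg x hx).2]⟩
lemma greedyStep_of_nonempty {C F : Finset (Fin n)} {v : Fin n}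
    (h : ((C \ F).filter (fun i => v ≤ i)).Nonempty) :
    greedyStep C F v = insert (((C \ F).filter (fun i => v ≤ i)).min' h) F := by
  unfold greedyStep
  simp [h]

lemma greedyStep_of_empty {C F : Finset (Fin n)} {v : Fin n}
    (h : ¬ ((C \ F).filter (fun i => v ≤ i)).Nonempty) :
    greedyStep C F v = F := by
  unfold greedyStep
  simp [h]

lemma greedy_ge_matching (C : Finset (Fin n)) :
    ∀ (π : List (Fin n)) (F T : Finset (Fin n)) (g : Fin n → Fin n),
    T ⊆ π.toFinset → Set.InjOn g ↑T →
    (∀ x ∈ T, x ≤ g x ∧ g x ∈ C ∧ g x ∉ F) →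
    F.card + T.card ≤ (π.foldl (greedyStep C) F).card := by
  intro π
  induction π with
  | nil =>
    intro F T g hT _ _
    simp only [List.toFinset_nil] at hT
    rw [Finset.subset_empty.1 hT]
    simp
  | cons v rest ih =>
    intro F T g hT hinj hprop
    simp only [List.foldl_cons]
    by_cases hvT : v ∈ T
    · -- greedy places v (a row is available)
      have hgv := hprop v hvT
      have hne : ((C \ F).filter (fun i => v ≤ i)).Nonempty :=
        ⟨g v, by simp [Finset.mem_filter, Finset.mem_sdiff, hgv.2.1, hgv.2.2, hgv.1]⟩
      set r := ((C \ F).filter (fun i => v ≤ i)).min' hne with hr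
      have hrmem : r ∈ (C \ F).filter (fun i => v ≤ i) := Finset.min'_mem _ _
      have hrF : r ∉ F := by
        have := (Finset.mem_filter.1 hrmem).1; exact (Finset.mem_sdiff.1 this).2
      have hstep : greedyStep C F v = insert r F := greedyStep_of_nonempty hne
      have hcard : (insert r F).card = F.card + 1 := Finset.card_insert_of_notMem hrF
      have hrle : r ≤ g v := Finset.min'_le _ _ (by
        simp [Finset.mem_filter, Finset.mem_sdiff, hgv.2.1, hgv.2.2, hgv.1])
      have hT' : T.erase v ⊆ rest.toFinset := by
        intro x hx
        have hxv := Finset.ne_of_mem_erase hx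
        have := hT (Finset.mem_of_mem_erase hx)
        simp only [List.toFinset_cons, Finset.mem_insert] at this
        tauto
      have hTcard : (T.erase v).card + 1 = T.card := Finset.card_erase_add_one hvT
      by_cases hw : ∃ w ∈ T.erase v, g w = r
      · obtain ⟨w, hwmem, hgw⟩ := hw
        have hwT : w ∈ T := Finset.mem_of_mem_erase hwmem
        have hwv : w ≠ v := Finset.ne_of_mem_erase hwmem
        set g' := Function.update g w (g v) with hg'
        have hkey : F.card + 1 + (T.erase v).card ≤
            (rest.foldl (greedyStep C) (insert r F)).card := by
          rw [← hcard]
          apply ih (insert r F) (T.erase v) g' hT'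
          · intro x hx y hy hxy
            simp only [Finset.mem_coe] at hx hy
            rw [hg'] at hxy
            by_cases hxw : x = w <;> by_cases hyw : y = w
            · rw [hxw, hyw]
            · exfalso
              rw [hxw, Function.update_self, Function.update_of_ne hyw] at hxy
              exact Finset.ne_of_mem_erase hy
                (hinj (Finset.mem_coe.2 (Finset.mem_of_mem_erase hy)) (Finset.mem_coe.2 hvT)
                  hxy.symm)
            · exfalso
              rw [hyw, Function.update_self, Function.update_of_ne hxw] at hxy
              exact Finset.ne_of_mem_erase hx
                (hinj (Finset.mem_coe.2 (Finset.mem_of_mem_erase hx)) (Finset.mem_coe.2 hvT)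
                  hxy)
            · rw [Function.update_of_ne hxw, Function.update_of_ne hyw] at hxy
              exact hinj (Finset.mem_coe.2 (Finset.mem_of_mem_erase hx))
                (Finset.mem_coe.2 (Finset.mem_of_mem_erase hy)) hxy
          · intro x hx
            by_cases hxw : x = w
            · subst hxw
              rw [hg', Function.update_self]
              refine ⟨?_, hgv.2.1, ?_⟩
              · exact ((hprop x hwT).1.trans_eq hgw).trans hrle
              · intro hmem
                rcases Finset.mem_insert.1 hmem with heq | hmem
                · exact hwv (hinj (Finset.mem_coe.2 hvT) (Finset.mem_coe.2 hwT) (heq.trans hgw.symm)).symm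
                · exact hgv.2.2 hmem
            · rw [hg', Function.update_of_ne hxw]
              have hxT : x ∈ T := Finset.mem_of_mem_erase hx
              refine ⟨(hprop x hxT).1, (hprop x hxT).2.1, ?_⟩
              intro hmem
              rcases Finset.mem_insert.1 hmem with heq | hmem
              · exact hxw (hinj (Finset.mem_coe.2 hxT) (Finset.mem_coe.2 hwT) (heq.trans hgw.symm))
              · exact (hprop x hxT).2.2 hmem
        rw [hstep]
        omega
      · push_neg at hw
        have hkey : F.card + 1 + (T.erase v).card ≤
            (rest.foldl (greedyStep C) (insert r F)).card := by
          rw [← hcard]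
          apply ih (insert r F) (T.erase v) g hT'
          · exact hinj.mono (by intro x hx; exact Finset.mem_coe.2 (Finset.mem_of_mem_erase hx))
          · intro x hx
            have hxT : x ∈ T := Finset.mem_of_mem_erase hx
            refine ⟨(hprop x hxT).1, (hprop x hxT).2.1, ?_⟩
            intro hmem
            rcases Finset.mem_insert.1 hmem with heq | hmem
            · exact hw x hx heq
            · exact (hprop x hxT).2.2 hmem
        rw [hstep]
        omega
    · -- v not in T
      have hT' : T ⊆ rest.toFinset := by
        intro x hx
        have := hT hx
        simp only [List.toFinset_cons, Finset.mem_insert] at this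
        rcases this with rfl | h
        · exact absurd hx hvT
        · exact h
      by_cases hne : ((C \ F).filter (fun i => v ≤ i)).Nonempty
      · set r := ((C \ F).filter (fun i => v ≤ i)).min' hne with hr
        have hrmem : r ∈ (C \ F).filter (fun i => v ≤ i) := Finset.min'_mem _ _
        have hrF : r ∉ F := (Finset.mem_sdiff.1 (Finset.mem_filter.1 hrmem).1).2
        have hstep : greedyStep C F v = insert r F := greedyStep_of_nonempty hne
        have hcard : (insert r F).card = F.card + 1 := Finset.card_insert_of_notMem hrF
        by_cases hw : ∃ w ∈ T, g w = r
        · obtain ⟨w, hwT, hgw⟩ := hw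
          have hkey : F.card + 1 + (T.erase w).card ≤
              (rest.foldl (greedyStep C) (insert r F)).card := by
            rw [← hcard]
            apply ih (insert r F) (T.erase w) g
              (fun x hx => hT' (Finset.mem_of_mem_erase hx))
              (hinj.mono (by intro x hx; exact Finset.mem_coe.2 (Finset.mem_of_mem_erase hx)))
            intro x hx
            have hxT : x ∈ T := Finset.mem_of_mem_erase hx
            refine ⟨(hprop x hxT).1, (hprop x hxT).2.1, ?_⟩
            intro hmem
            rcases Finset.mem_insert.1 hmem with heq | hmem
            · exact Finset.ne_of_mem_erase hx
                (hinj (Finset.mem_coe.2 hxT) (Finset.mem_coe.2 hwT) (heq.trans hgw.symm))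
            · exact (hprop x hxT).2.2 hmem
          have hTcard : (T.erase w).card + 1 = T.card := Finset.card_erase_add_one hwT
          rw [hstep]
          omega
        · push_neg at hw
          have hkey : F.card + 1 + T.card ≤
              (rest.foldl (greedyStep C) (insert r F)).card := by
            rw [← hcard]
            apply ih (insert r F) T g hT' hinj
            intro x hx
            refine ⟨(hprop x hx).1, (hprop x hx).2.1, ?_⟩
            intro hmem
            rcases Finset.mem_insert.1 hmem with heq | hmem
            · exact hw x hx heq
            · exact (hprop x hx).2.2 hmem
          rw [hstep]
          omega
      · rw [greedyStep_of_empty hne]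
        exact ih F T g hT' hinj hprop
lemma greedyStep_of_nonempty' {C F : Finset (Fin n)} {v : Fin n}
    (h : ((C \ F).filter (fun i => v ≤ i)).Nonempty) :
    greedyStep C F v = insert (((C \ F).filter (fun i => v ≤ i)).min' h) F := by
  unfold greedyStep; simp [h]

lemma greedyStep_of_empty' {C F : Finset (Fin n)} {v : Fin n}
    (h : ¬ ((C \ F).filter (fun i => v ≤ i)).Nonempty) :
    greedyStep C F v = F := by
  unfold greedyStep; simp [h]

lemma greedyStep_subset' (C F : Finset (Fin n)) (v : Fin n) : F ⊆ greedyStep C F v := by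
  unfold greedyStep
  dsimp only
  split
  · exact Finset.subset_insert _ _
  · exact Finset.Subset.refl _

lemma foldl_greedy_subset' (C : Finset (Fin n)) :
    ∀ (π : List (Fin n)) (F : Finset (Fin n)), F ⊆ π.foldl (greedyStep C) F := by
  intro π
  induction π with
  | nil => intro F; exact Finset.Subset.refl _
  | cons v rest ih => intro F; exact (greedyStep_subset' C F v).trans (ih _)

lemma greedy_extract (C : Finset (Fin n)) :
    ∀ (π : List (Fin n)) (F : Finset (Fin n)), π.Nodup →
    ∃ (D : Finset (Fin n)) (f : Fin n → Fin n),
      D ⊆ π.toFinset ∧ Set.InjOn f ↑D ∧ (∀ x ∈ D, x ≤ f x) ∧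
      Finset.image f D = (π.foldl (greedyStep C) F) \ F := by
  intro π
  induction π with
  | nil =>
    intro F _
    exact ⟨∅, id, by simp, by simp [Set.InjOn], by simp, by simp⟩
  | cons v rest ih =>
    intro F hnd
    obtain ⟨hv, hnd'⟩ := List.nodup_cons.1 hnd
    simp only [List.foldl_cons]
    by_cases hne : ((C \ F).filter (fun i => v ≤ i)).Nonempty
    · set r := ((C \ F).filter (fun i => v ≤ i)).min' hne with hr
      have hrmem : r ∈ (C \ F).filter (fun i => v ≤ i) := Finset.min'_mem _ _
      have hrF : r ∉ F := (Finset.mem_sdiff.1 (Finset.mem_filter.1 hrmem).1).2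
      have hvr : v ≤ r := (Finset.mem_filter.1 hrmem).2
      have hstep : greedyStep C F v = insert r F := greedyStep_of_nonempty' hne
      rw [hstep]
      obtain ⟨D, f, hD, hinj, hle, himg⟩ := ih (insert r F) hnd'
      have hvD : v ∉ D := fun h => hv (List.mem_toFinset.1 (hD h))
      have hrfin : r ∈ rest.foldl (greedyStep C) (insert r F) :=
        foldl_greedy_subset' C rest (insert r F) (Finset.mem_insert_self r F)
      refine ⟨insert v D, Function.update f v r, ?_, ?_, ?_, ?_⟩
      · intro x hx
        rcases Finset.mem_insert.1 hx with rfl | hx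
        · simp
        · simp [List.mem_toFinset.1 (hD hx)]
      · intro x hx y hy hxy
        simp only [Finset.coe_insert, Set.mem_insert_iff, Finset.mem_coe] at hx hy
        rcases hx with rfl | hx <;> rcases hy with rfl | hy
        · rfl
        · exfalso
          rw [Function.update_self, Function.update_of_ne (by rintro rfl; exact hvD hy)] at hxy
          have : f y ∈ Finset.image f D := Finset.mem_image_of_mem f hy
          rw [himg] at this
          exact (Finset.mem_sdiff.1 this).2 (hxy ▸ Finset.mem_insert_self r F)
        · exfalso
          rw [Function.update_self, Function.update_of_ne (by rintro rfl; exact hvD hx)] at hxy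
          have : f x ∈ Finset.image f D := Finset.mem_image_of_mem f hx
          rw [himg] at this
          exact (Finset.mem_sdiff.1 this).2 (hxy ▸ Finset.mem_insert_self r F)
        · rw [Function.update_of_ne (by rintro rfl; exact hvD hx),
            Function.update_of_ne (by rintro rfl; exact hvD hy)] at hxy
          exact hinj (Finset.mem_coe.2 hx) (Finset.mem_coe.2 hy) hxy
      · intro x hx
        rcases Finset.mem_insert.1 hx with rfl | hx2
        · rw [Function.update_self]; exact hvr
        · rw [Function.update_of_ne (by rintro rfl; exact hvD hx2)]; exact hle x hx2
      · rw [Finset.image_insert, Function.update_self]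
        have himg' : Finset.image (Function.update f v r) D = Finset.image f D := by
          apply Finset.image_congr
          intro x hx
          exact Function.update_of_ne (by rintro rfl; exact hvD hx) _ _
        rw [himg', himg]
        ext x
        simp only [Finset.mem_insert, Finset.mem_sdiff, Finset.mem_insert]
        constructor
        · rintro (rfl | ⟨hx1, hx2⟩)
          · exact ⟨hrfin, hrF⟩
          · exact ⟨hx1, fun h => hx2 (Or.inr h)⟩
        · rintro ⟨hx1, hx2⟩
          by_cases hxr : x = r
          · exact Or.inl hxr
          · exact Or.inr ⟨hx1, by tauto⟩
    · rw [greedyStep_of_empty' hne]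
      obtain ⟨D, f, hD, hinj, hle, himg⟩ := ih F hnd'
      exact ⟨D, f, fun x hx => by simp [List.mem_toFinset.1 (hD hx)], hinj, hle, himg⟩
lemma schubertDom_of_card_counts (B C : Finset (Fin n)) (hcard : B.card = C.card)
    (hcount : ∀ t : Fin n,
      (B.filter (fun x => t ≤ x)).card ≤ (C.filter (fun x => t ≤ x)).card) :
    SchubertDom B C := by
  unfold SchubertDom
  apply sorted_forall₂ _ _ (Finset.pairwise_sort _ _) (Finset.pairwise_sort _ _)
  · rw [Finset.length_sort, Finset.length_sort, hcard]
  · intro t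
    rw [← card_filter_eq_countP_sort, ← card_filter_eq_countP_sort]
    exact hcount t

lemma fix_matching (C D : Finset (Fin n)) :
    ∀ (N : ℕ) (f : Fin n → Fin n), (∑ x ∈ D, (f x).val) ≤ N →
    Set.InjOn f ↑D → (∀ x ∈ D, x ≤ f x ∧ f x ∈ C) →
    ∃ g, Set.InjOn g ↑D ∧ (∀ x ∈ D, x ≤ g x ∧ g x ∈ C) ∧
      ∀ x ∈ D, x ∈ C → x ∈ Finset.image g D := by
  intro N
  induction N using Nat.strong_induction_on with
  | _ N ihN =>
    intro f hsum hinj hf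
    by_cases h : ∀ x ∈ D, x ∈ C → x ∈ Finset.image f D
    · exact ⟨f, hinj, hf, h⟩
    · push_neg at h
      obtain ⟨m, hmD, hmC, hmim⟩ := h
      have hmlt : m < f m := lt_of_le_of_ne (hf m hmD).1
        (fun h => hmim (h ▸ Finset.mem_image_of_mem f hmD))
      set f' := Function.update f m m with hf'
      have hval : (fun x => ((f' : Fin n → Fin n) x).val) =
          Function.update (fun x => (f x).val) m m.val := by
        funext x
        by_cases hx : x = m
        · subst hx; simp [hf']
        · simp [hf', Function.update_of_ne hx]
      have hsum' : (∑ x ∈ D, (f' x).val) < (∑ x ∈ D, (f x).val) := by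
        rw [hval, Finset.sum_update_of_mem hmD]
        rw [← Finset.sum_erase_add D (fun x => (f x).val) hmD]
        have : D \ {m} = D.erase m := by rw [Finset.sdiff_singleton_eq_erase]
        rw [this]
        omega
      have hinj' : Set.InjOn f' ↑D := by
        intro x hx y hy hxy
        simp only [Finset.mem_coe] at hx hy
        by_cases hxm : x = m <;> by_cases hym : y = m
        · rw [hxm, hym]
        · exfalso
          rw [hxm, hf', Function.update_self, Function.update_of_ne hym] at hxy
          exact hmim (hxy ▸ Finset.mem_image_of_mem f hy)
        · exfalso
          rw [hym, hf', Function.update_self, Function.update_of_ne hxm] at hxy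
          exact hmim (hxy ▸ Finset.mem_image_of_mem f hx)
        · rw [hf', Function.update_of_ne hxm, Function.update_of_ne hym] at hxy
          exact hinj (Finset.mem_coe.2 hx) (Finset.mem_coe.2 hy) hxy
      have hf'' : ∀ x ∈ D, x ≤ f' x ∧ f' x ∈ C := by
        intro x hx
        by_cases hxm : x = m
        · subst hxm; simp [hf', hmC]
        · rw [hf', Function.update_of_ne hxm]; exact hf x hx
      exact ihN (∑ x ∈ D, (f' x).val) (lt_of_lt_of_le hsum' hsum) f' le_rfl hinj' hf''

lemma exists_dom_superset (C D : Finset (Fin n)) (f : Fin n → Fin n)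
    (hinj : Set.InjOn f ↑D) (hf : ∀ x ∈ D, x ≤ f x ∧ f x ∈ C) :
    ∃ B, SchubertDom B C ∧ D ⊆ B := by
  obtain ⟨g, hginj, hg, hcl⟩ := fix_matching C D _ f le_rfl hinj hf
  set I := Finset.image g D with hI
  have hIC : I ⊆ C := by
    intro x hx
    obtain ⟨y, hy, rfl⟩ := Finset.mem_image.1 hx
    exact (hg y hy).2
  have hIcard : I.card = D.card := Finset.card_image_of_injOn hginj
  set B := D ∪ (C \ I) with hB
  have hdisj : Disjoint D (C \ I) := by
    rw [Finset.disjoint_left]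
    intro x hxD hx
    exact (Finset.mem_sdiff.1 hx).2 (hcl x hxD (Finset.mem_sdiff.1 hx).1)
  have hcard : B.card = C.card := by
    rw [hB, Finset.card_union_of_disjoint hdisj, Finset.card_sdiff_of_subset hIC, hIcard]
    have : D.card ≤ C.card := hIcard ▸ Finset.card_le_card hIC
    omega
  set h : Fin n → Fin n := fun x => if x ∈ D then g x else x with hh
  have hhmem : ∀ x ∈ B, x ≤ h x ∧ h x ∈ C := by
    intro x hx
    rcases Finset.mem_union.1 hx with hx | hx
    · simp only [hh, if_pos hx]
      exact hg x hx
    · have hxD : x ∉ D := Finset.disjoint_right.1 hdisj hx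
      simp only [hh, if_neg hxD]
      exact ⟨le_rfl, (Finset.mem_sdiff.1 hx).1⟩
  have hhinj : Set.InjOn h ↑B := by
    intro x hx y hy hxy
    simp only [Finset.mem_coe, hB, Finset.mem_union] at hx hy
    rcases hx with hx | hx <;> rcases hy with hy | hy
    · simp only [hh, if_pos hx, if_pos hy] at hxy
      exact hginj (Finset.mem_coe.2 hx) (Finset.mem_coe.2 hy) hxy
    · exfalso
      have hyD : y ∉ D := Finset.disjoint_right.1 hdisj hy
      simp only [hh, if_pos hx, if_neg hyD] at hxy
      exact (Finset.mem_sdiff.1 hy).2 (hxy ▸ Finset.mem_image_of_mem g hx)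
    · exfalso
      have hxD : x ∉ D := Finset.disjoint_right.1 hdisj hx
      simp only [hh, if_neg hxD, if_pos hy] at hxy
      exact (Finset.mem_sdiff.1 hx).2 (hxy ▸ Finset.mem_image_of_mem g hy)
    · have hxD : x ∉ D := Finset.disjoint_right.1 hdisj hx
      have hyD : y ∉ D := Finset.disjoint_right.1 hdisj hy
      simpa [hh, if_neg hxD, if_neg hyD] using hxy
  refine ⟨B, schubertDom_of_card_counts B C hcard ?_, Finset.subset_union_left⟩
  intro t
  apply Finset.card_le_card_of_injOn h
  · intro x hx
    simp only [Finset.mem_coe, Finset.mem_filter] at hx ⊢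
    exact ⟨(hhmem x hx.1).2, hx.2.trans (hhmem x hx.1).1⟩
  · exact hhinj.mono (fun x hx => Finset.mem_coe.2
      (Finset.filter_subset _ _ (Finset.mem_coe.1 hx)))

/-- For any ordering `π` of the elements of `S`, the number of rows filled by
the greedy algorithm on the column `C` equals the rank `r_C(S)` of `S` in the
Schubert matroid `SM_n(C)`; in particular it does not depend on `π`. -/
theorem greedy_filling_card_eq_rank (n : ℕ) (C S : Finset (Fin n))
    (π : List (Fin n)) (hnd : π.Nodup) (hπ : π.toFinset = S) :
    (π.foldl (greedyStep C) ∅).card = schubertRank C S := by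
  classical
  apply le_antisymm
  · obtain ⟨D, f, hD, hinj, hle, himg⟩ := greedy_extract C π ∅ hnd
    rw [Finset.sdiff_empty] at himg
    have hsub : π.foldl (greedyStep C) ∅ ⊆ C := by
      have := foldl_greedy_subset_union C π ∅
      simpa using this
    have hfC : ∀ x ∈ D, x ≤ f x ∧ f x ∈ C := fun x hx =>
      ⟨hle x hx, hsub (himg ▸ Finset.mem_image_of_mem f hx)⟩
    obtain ⟨B, hBdom, hDB⟩ := exists_dom_superset C D f hinj hfC
    have hcard : (π.foldl (greedyStep C) ∅).card = D.card := by
      rw [← himg, Finset.card_image_of_injOn hinj]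
    rw [hcard]
    have hDS : D ⊆ S ∩ B := Finset.subset_inter (hπ ▸ hD) hDB
    calc D.card ≤ (S ∩ B).card := Finset.card_le_card hDS
      _ ≤ schubertRank C S := by
        apply Finset.le_sup (f := fun B => (S ∩ B).card)
        exact Finset.mem_filter.2 ⟨Finset.mem_univ B, hBdom⟩
  · apply Finset.sup_le
    intro B hB
    have hdom : SchubertDom B C := (Finset.mem_filter.1 hB).2
    obtain ⟨g, hginj, hg⟩ := forall₂_matching hdom
      (Finset.sort_nodup B _) (Finset.sort_nodup C _)
    rw [Finset.sort_toFinset] at hginj hg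
    simp only [Finset.sort_toFinset] at hg
    have hkey := greedy_ge_matching C π ∅ (S ∩ B) g
      (by rw [hπ]; exact Finset.inter_subset_left)
      (hginj.mono (Finset.coe_subset.2 Finset.inter_subset_right))
      (fun x hx =>
        ⟨(hg x (Finset.mem_of_mem_inter_right hx)).1,
         (hg x (Finset.mem_of_mem_inter_right hx)).2,
         Finset.notMem_empty _⟩)
    simpa using hkey
end

section
/- Let D be a diagram in the n×n grid with columns D_1,...,D_n (each D_j ⊆ [n] a set of row indices), and define r_D(S) = Σ_j r_{D_j}(S), where r_{D_j} is the rank function of the Schubert matroid SM_n(D_j). Then for each j and S ⊆ [n], r_{D_j}(S) = θ_{D}^j(S), the number of paired '()' plus the number of '*' in the column word word_{j,S}(D). -/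
open scoped Classical

/-- `θ_D^j(S)`: the number of matched `()` pairs (inside-out matching) plus the
number of `*`'s in the word of column `C = D_j` with respect to `S`, read from
top to bottom: `(` for a non-box row in `S`, `)` for a box row not in `S`, `*`
for a box row in `S`. -/
def thetaCol {n : ℕ} (C S : Finset (Fin n)) : ℕ :=
  ((List.finRange n).foldl
    (fun st i =>
      if i ∈ C then
        (if i ∈ S then (st.1, st.2 + 1)
         else if 0 < st.1 then (st.1 - 1, st.2 + 1) else st)
      else (if i ∈ S then (st.1 + 1, st.2) else st))
    ((0, 0) : ℕ × ℕ)).2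

namespace SchubAux

variable {n : ℕ}

lemma countP_mono_up (p : Fin n → Bool) (hp : ∀ a b : Fin n, a ≤ b → p a → p b)
    {l₁ l₂ : List (Fin n)} (h : List.Forall₂ (· ≤ ·) l₁ l₂) :
    l₁.countP p ≤ l₂.countP p := by
  induction h with
  | nil => simp
  | @cons a b l₁' l₂' hab _ ih =>
    rw [List.countP_cons, List.countP_cons]
    by_cases h1 : p a = true
    · rw [if_pos h1, if_pos (hp _ _ hab h1)]; omega
    · rw [if_neg h1]; split <;> omega

lemma countP_mono_down (p : Fin n → Bool) (hp : ∀ a b : Fin n, a ≤ b → p b → p a)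
    {l₁ l₂ : List (Fin n)} (h : List.Forall₂ (· ≤ ·) l₁ l₂) :
    l₂.countP p ≤ l₁.countP p := by
  induction h with
  | nil => simp
  | @cons a b l₁' l₂' hab _ ih =>
    rw [List.countP_cons, List.countP_cons]
    by_cases h1 : p b = true
    · rw [if_pos (hp _ _ hab h1)]; split <;> omega
    · rw [if_neg h1]; split <;> omega

lemma card_filter_eq_countP_sort (T : Finset (Fin n)) (p : Fin n → Prop) [DecidablePred p] :
    (T.filter p).card = (T.sort (· ≤ ·)).countP (fun x => decide (p x)) := by
  have h1 : ((T.sort (· ≤ ·) : List (Fin n)) : Multiset (Fin n)) = T.val := Finset.sort_eq _ _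
  have h2 : Multiset.countP p T.val = (T.filter p).card := by
    rw [Multiset.countP_eq_card_filter]; rfl
  rw [← h2, ← h1, Multiset.coe_countP]

lemma forall₂_of_counts : ∀ (lb lc : List (Fin n)), lb.Pairwise (· ≤ ·) → lc.Pairwise (· ≤ ·) →
    lb.length = lc.length →
    (∀ τ : Fin n, lc.countP (fun x => decide (x ≤ τ)) ≤ lb.countP (fun x => decide (x ≤ τ))) →
    List.Forall₂ (· ≤ ·) lb lc
  | [], [], _, _, _, _ => List.Forall₂.nil
  | [], c :: lc, _, _, hlen, _ => by simp at hlen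
  | b :: lb, [], _, _, hlen, _ => by simp at hlen
  | b :: lb, c :: lc, hsb, hsc, hlen, hcnt => by
    have hbc : b ≤ c := by
      have h1 : 0 < (c :: lc).countP (fun x => decide (x ≤ c)) := by
        rw [List.countP_cons]; simp
      have h2 := lt_of_lt_of_le h1 (hcnt c)
      rw [List.countP_pos_iff] at h2
      obtain ⟨x, hx, hxc⟩ := h2
      simp at hxc
      rcases List.mem_cons.mp hx with rfl | hx
      · exact hxc
      · exact le_trans (List.rel_of_pairwise_cons hsb hx) hxc
    refine List.Forall₂.cons hbc (forall₂_of_counts lb lc hsb.of_cons hsc.of_cons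
      (by simpa using hlen) ?_)
    intro τ
    by_cases hcτ : c ≤ τ
    · have hbτ : b ≤ τ := le_trans hbc hcτ
      have := hcnt τ
      rw [List.countP_cons, List.countP_cons, if_pos (by simpa using hcτ),
        if_pos (by simpa using hbτ)] at this
      omega
    · have : lc.countP (fun x => decide (x ≤ τ)) = 0 := by
        rw [List.countP_eq_zero]
        intro x hx
        simp only [decide_eq_true_eq]
        intro hxτ
        exact hcτ (le_trans (List.rel_of_pairwise_cons hsc hx) hxτ)
      omega

lemma schubertDom_iff (B C : Finset (Fin n)) :
    SchubertDom B C ↔ B.card = C.card ∧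
      ∀ τ : Fin n, (C.filter (· ≤ τ)).card ≤ (B.filter (· ≤ τ)).card := by
  constructor
  · intro h
    refine ⟨?_, ?_⟩
    · rw [← Finset.length_sort (α := Fin n) (· ≤ ·), ← Finset.length_sort (α := Fin n) (· ≤ ·)]
      exact h.length_eq
    · intro τ
      rw [card_filter_eq_countP_sort, card_filter_eq_countP_sort]
      exact countP_mono_down _ (fun a b hab hb => by simp at hb ⊢; exact le_trans hab hb) h
  · rintro ⟨hcard, hcnt⟩
    refine forall₂_of_counts _ _ (Finset.pairwise_sort _ _) (Finset.pairwise_sort _ _) ?_ ?_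
    · rw [Finset.length_sort, Finset.length_sort, hcard]
    · intro τ
      rw [← card_filter_eq_countP_sort, ← card_filter_eq_countP_sort]
      exact hcnt τ

lemma suffix_count_le (B C : Finset (Fin n)) (h : SchubertDom B C) (u : ℕ) :
    (B.filter (fun i => u ≤ i.val)).card ≤ (C.filter (fun i => u ≤ i.val)).card := by
  rw [card_filter_eq_countP_sort, card_filter_eq_countP_sort]
  exact countP_mono_up _ (fun a b hab ha => by simp at ha ⊢; exact le_trans ha hab) h


def colStep (C S : Finset (Fin n)) : ℕ × ℕ → Fin n → ℕ × ℕ := fun st i =>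
  if i ∈ C then
    (if i ∈ S then (st.1, st.2 + 1)
     else if 0 < st.1 then (st.1 - 1, st.2 + 1) else st)
  else (if i ∈ S then (st.1 + 1, st.2) else st)

def pre (T : Finset (Fin n)) (t : ℕ) : ℕ := (T.filter (fun i => i.val < t)).card

def go (C S : Finset (Fin n)) (t : ℕ) : ℕ × ℕ :=
  ((List.finRange n).take t).foldl (colStep C S) (0, 0)

lemma go_zero (C S : Finset (Fin n)) : go C S 0 = (0, 0) := rfl

lemma go_succ (C S : Finset (Fin n)) {t : ℕ} (ht : t < n) :
    go C S (t + 1) = colStep C S (go C S t) ⟨t, ht⟩ := by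
  unfold go
  rw [List.take_succ]
  have h : (List.finRange n)[t]? = some ⟨t, ht⟩ := by
    rw [List.getElem?_eq_getElem (by simpa using ht)]
    simp
  rw [h]
  simp

lemma pre_zero (T : Finset (Fin n)) : pre T 0 = 0 := by
  simp [pre]

lemma pre_succ (T : Finset (Fin n)) {t : ℕ} (ht : t < n) :
    pre T (t + 1) = pre T t + (if (⟨t, ht⟩ : Fin n) ∈ T then 1 else 0) := by
  classical
  unfold pre
  have hsplit : T.filter (fun i => i.val < t + 1) =
      T.filter (fun i => i.val < t) ∪ T.filter (fun i => i = ⟨t, ht⟩) := by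
    ext x
    simp only [Finset.mem_filter, Finset.mem_union]
    constructor
    · rintro ⟨hx, hlt⟩
      rcases Nat.lt_succ_iff_lt_or_eq.mp hlt with h | h
      · exact Or.inl ⟨hx, h⟩
      · exact Or.inr ⟨hx, Fin.ext h⟩
    · rintro (⟨hx, h⟩ | ⟨hx, h⟩)
      · exact ⟨hx, Nat.lt_succ_of_lt h⟩
      · exact ⟨hx, by subst h; exact Nat.lt_succ_self t⟩
  rw [hsplit, Finset.card_union_of_disjoint]
  · congr 1
    rw [Finset.filter_eq']
    split
    · simp
    · simp
  · rw [Finset.disjoint_left]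
    intro x hx1 hx2
    simp only [Finset.mem_filter] at hx1 hx2
    rcases hx2 with ⟨-, rfl⟩
    exact absurd hx1.2 (by simp)

lemma pre_of_le (T : Finset (Fin n)) {t : ℕ} (ht : n ≤ t) : pre T t = T.card := by
  unfold pre
  rw [Finset.filter_true_of_mem]
  intro x _
  exact lt_of_lt_of_le x.isLt ht

def Inv (C S : Finset (Fin n)) (t : ℕ) : Prop :=
  (go C S t).2 + (go C S t).1 = pre (C ∩ S) t + pre (S \ C) t ∧
  (∃ u ≤ t, (go C S t).2 + pre (C \ S) u = pre (C ∩ S) t + pre (S \ C) u + pre (C \ S) t) ∧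
  ∃ X Y : Finset (Fin n), X ⊆ S \ C ∧ Y ⊆ C \ S ∧ (∀ i ∈ X, i.val < t) ∧
    (∀ i ∈ Y, i.val < t) ∧ X.card = Y.card ∧ (go C S t).2 = pre (C ∩ S) t + X.card ∧
    ∀ τ : ℕ, (Y.filter (fun i => i.val ≤ τ)).card ≤ (X.filter (fun i => i.val ≤ τ)).card


lemma inv (C S : Finset (Fin n)) : ∀ t, t ≤ n → Inv C S t := by
  intro t
  induction t with
  | zero =>
    intro _
    refine ⟨by simp [go_zero, pre_zero], ⟨0, le_refl 0, by simp [go_zero, pre_zero]⟩,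
      ∅, ∅, by simp, by simp, by simp, by simp, rfl, by simp [go_zero, pre_zero], by simp⟩
  | succ t ih =>
    intro ht1
    have ht : t < n := ht1
    obtain ⟨h1, ⟨u, hu, h2⟩, X, Y, hXS, hYS, hXt, hYt, hXY, h3, h4⟩ := ih (le_of_lt ht)
    set i : Fin n := ⟨t, ht⟩ with hidef
    have hgs := go_succ C S ht
    have pst := pre_succ (C ∩ S) ht
    have pop := pre_succ (S \ C) ht
    have pcl := pre_succ (C \ S) ht
    by_cases hiC : i ∈ C <;> by_cases hiS : i ∈ S
    · -- star
      have hgs2 : go C S (t + 1) = ((go C S t).1, (go C S t).2 + 1) := by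
        rw [hgs]; simp [colStep, ← hidef, hiC, hiS]
      rw [if_pos (Finset.mem_inter.mpr ⟨hiC, hiS⟩)] at pst
      rw [if_neg (by simp [← hidef, hiC])] at pop
      rw [if_neg (by simp [← hidef, hiS])] at pcl
      refine ⟨by rw [hgs2]; simp; omega, ⟨u, le_trans hu (Nat.le_succ t), by rw [hgs2]; simp; omega⟩,
        X, Y, hXS, hYS, fun x hx => Nat.lt_succ_of_lt (hXt x hx),
        fun x hx => Nat.lt_succ_of_lt (hYt x hx), hXY, by rw [hgs2]; simp; omega, h4⟩
    · -- close
      rw [if_neg (by simp [← hidef, hiS])] at pst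
      rw [if_neg (by simp [← hidef, hiC])] at pop
      rw [if_pos (Finset.mem_sdiff.mpr ⟨hiC, hiS⟩)] at pcl
      by_cases ho : 0 < (go C S t).1
      · have hgs2 : go C S (t + 1) = ((go C S t).1 - 1, (go C S t).2 + 1) := by
          rw [hgs]; simp [colStep, ← hidef, hiC, hiS, ho]
        -- find spare open p
        have hsub : X ⊆ (S \ C).filter (fun x => x.val < t) := by
          intro x hx
          exact Finset.mem_filter.mpr ⟨hXS hx, hXt x hx⟩
        have hlt : X.card < ((S \ C).filter (fun x => x.val < t)).card := by
          have hpre : pre (S \ C) t = ((S \ C).filter (fun x => x.val < t)).card := rfl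
          omega
        have hss : X ⊂ (S \ C).filter (fun x => x.val < t) :=
          Finset.ssubset_iff_subset_ne.mpr ⟨hsub, fun h => by rw [h] at hlt; omega⟩
        obtain ⟨p, hpF, hpX⟩ := Finset.exists_of_ssubset hss
        rw [Finset.mem_filter] at hpF
        have hiY : i ∉ Y := fun h => by have := hYt i h; simp [hidef] at this
        refine ⟨by rw [hgs2]; simp; omega,
          ⟨u, le_trans hu (Nat.le_succ t), by rw [hgs2]; simp; omega⟩,
          insert p X, insert i Y, ?_, ?_, ?_, ?_, ?_, ?_, ?_⟩
        · intro x hx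
          rcases Finset.mem_insert.mp hx with rfl | hx
          · exact hpF.1
          · exact hXS hx
        · intro x hx
          rcases Finset.mem_insert.mp hx with rfl | hx
          · exact Finset.mem_sdiff.mpr ⟨hiC, hiS⟩
          · exact hYS hx
        · intro x hx
          rcases Finset.mem_insert.mp hx with rfl | hx
          · exact Nat.lt_succ_of_lt hpF.2
          · exact Nat.lt_succ_of_lt (hXt x hx)
        · intro x hx
          rcases Finset.mem_insert.mp hx with rfl | hx
          · simp [hidef]
          · exact Nat.lt_succ_of_lt (hYt x hx)
        · rw [Finset.card_insert_of_notMem hpX, Finset.card_insert_of_notMem hiY, hXY]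
        · rw [hgs2, Finset.card_insert_of_notMem hpX]
          simp
          omega
        · intro τ
          rw [Finset.filter_insert, Finset.filter_insert]
          by_cases hτ : t ≤ τ
          · rw [if_pos (by simp [hidef]; omega), if_pos (by omega : p.val ≤ τ)]
            rw [Finset.card_insert_of_notMem (fun h => hpX (Finset.mem_filter.mp h).1),
              Finset.card_insert_of_notMem (fun h => hiY (Finset.mem_filter.mp h).1)]
            exact Nat.succ_le_succ (h4 τ)
          · rw [if_neg (by simp [hidef]; omega)]
            split
            · exact le_trans (h4 τ) (Finset.card_le_card (Finset.subset_insert _ _))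
            · exact h4 τ
      · have hgs2 : go C S (t + 1) = go C S t := by
          rw [hgs]; simp [colStep, ← hidef, hiC, hiS, ho]
        have ho0 : (go C S t).1 = 0 := by omega
        refine ⟨by rw [hgs2]; omega,
          ⟨t + 1, le_refl _, by rw [hgs2]; omega⟩,
          X, Y, hXS, hYS, fun x hx => Nat.lt_succ_of_lt (hXt x hx),
          fun x hx => Nat.lt_succ_of_lt (hYt x hx), hXY, by rw [hgs2]; omega, h4⟩
    · -- open
      have hgs2 : go C S (t + 1) = ((go C S t).1 + 1, (go C S t).2) := by
        rw [hgs]; simp [colStep, ← hidef, hiC, hiS]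
      rw [if_neg (by simp [← hidef, hiC])] at pst
      rw [if_pos (Finset.mem_sdiff.mpr ⟨hiS, hiC⟩)] at pop
      rw [if_neg (by simp [← hidef, hiC])] at pcl
      refine ⟨by rw [hgs2]; simp; omega, ⟨u, le_trans hu (Nat.le_succ t), by rw [hgs2]; omega⟩,
        X, Y, hXS, hYS, fun x hx => Nat.lt_succ_of_lt (hXt x hx),
        fun x hx => Nat.lt_succ_of_lt (hYt x hx), hXY, by rw [hgs2]; omega, h4⟩
    · -- blank
      have hgs2 : go C S (t + 1) = go C S t := by
        rw [hgs]; simp [colStep, ← hidef, hiC, hiS]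
      rw [if_neg (by simp [← hidef, hiC])] at pst
      rw [if_neg (by simp [← hidef, hiS])] at pop
      rw [if_neg (by simp [← hidef, hiC])] at pcl
      exact ⟨by rw [hgs2]; omega, ⟨u, le_trans hu (Nat.le_succ t), by rw [hgs2]; omega⟩,
        X, Y, hXS, hYS, fun x hx => Nat.lt_succ_of_lt (hXt x hx),
        fun x hx => Nat.lt_succ_of_lt (hYt x hx), hXY, by rw [hgs2]; omega, h4⟩


lemma thetaCol_eq_go (C S : Finset (Fin n)) : thetaCol C S = (go C S n).2 := by
  unfold thetaCol go
  rw [List.take_of_length_le (by simp)]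
  rfl

end SchubAux

/-- For a diagram with columns `D j`, the rank function of the Schubert matroid
of each column equals the parenthesis-matching statistic `θ_D^j`. -/
theorem schubertRank_eq_theta (n : ℕ) (D : Fin n → Finset (Fin n)) :
    ∀ (j : Fin n) (S : Finset (Fin n)), schubertRank (D j) S = thetaCol (D j) S := by
  intro j S
  classical
  set C := D j with hCdef
  have hθ : thetaCol C S = (SchubAux.go C S n).2 := SchubAux.thetaCol_eq_go C S
  obtain ⟨h1, ⟨u, hu, h2⟩, X, Y, hXS, hYS, hXt, hYt, hXY, h3, h4⟩ := SchubAux.inv C S n le_rfl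
  rw [SchubAux.pre_of_le _ le_rfl, SchubAux.pre_of_le _ le_rfl] at h2
  rw [SchubAux.pre_of_le _ le_rfl] at h3
  unfold schubertRank
  apply le_antisymm
  · rw [hθ]
    apply Finset.sup_le
    intro B hB
    have hdom : SchubertDom B C := (Finset.mem_filter.mp hB).2
    have hsplit : ((S ∩ B).filter (fun i : Fin n => i.val < u)).card +
        ((S ∩ B).filter (fun i : Fin n => ¬ i.val < u)).card = (S ∩ B).card :=
      Finset.card_filter_add_card_filter_not _
    have hp1 : ((S ∩ B).filter (fun i : Fin n => i.val < u)).card ≤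
        SchubAux.pre (C ∩ S) u + SchubAux.pre (S \ C) u := by
      have hsub : (S ∩ B).filter (fun i : Fin n => i.val < u) ⊆
          (C ∩ S).filter (fun i : Fin n => i.val < u) ∪
            (S \ C).filter (fun i : Fin n => i.val < u) := by
        intro x hx
        rw [Finset.mem_filter, Finset.mem_inter] at hx
        by_cases hxC : x ∈ C
        · exact Finset.mem_union_left _
            (Finset.mem_filter.mpr ⟨Finset.mem_inter.mpr ⟨hxC, hx.1.1⟩, hx.2⟩)
        · exact Finset.mem_union_right _
            (Finset.mem_filter.mpr ⟨Finset.mem_sdiff.mpr ⟨hx.1.1, hxC⟩, hx.2⟩)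
      exact le_trans (Finset.card_le_card hsub) (Finset.card_union_le _ _)
    have hp2 : ((S ∩ B).filter (fun i : Fin n => ¬ i.val < u)).card ≤
        (C.filter (fun i : Fin n => u ≤ i.val)).card := by
      refine le_trans (Finset.card_le_card ?_) (SchubAux.suffix_count_le B C hdom u)
      intro x hx
      rw [Finset.mem_filter, Finset.mem_inter] at hx
      exact Finset.mem_filter.mpr ⟨hx.1.2, by omega⟩
    have hdisjCS : Disjoint (C ∩ S) (C \ S) := by
      rw [Finset.disjoint_right]
      intro x hx hx2
      exact (Finset.mem_sdiff.mp hx).2 (Finset.mem_inter.mp hx2).2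
    have hCun : C ∩ S ∪ C \ S = C := by
      ext x
      simp only [Finset.mem_union, Finset.mem_inter, Finset.mem_sdiff]
      tauto
    have hsufC : (C.filter (fun i : Fin n => u ≤ i.val)).card =
        ((C ∩ S).filter (fun i : Fin n => u ≤ i.val)).card +
        ((C \ S).filter (fun i : Fin n => u ≤ i.val)).card := by
      conv_lhs => rw [← hCun]
      rw [Finset.filter_union,
        Finset.card_union_of_disjoint (Finset.disjoint_filter_filter hdisjCS)]
    have hps1 : SchubAux.pre (C ∩ S) u +
        ((C ∩ S).filter (fun i : Fin n => u ≤ i.val)).card = (C ∩ S).card := by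
      have h := Finset.card_filter_add_card_filter_not (s := C ∩ S)
        (fun i : Fin n => i.val < u)
      have heq : (C ∩ S).filter (fun i : Fin n => ¬ i.val < u) =
          (C ∩ S).filter (fun i : Fin n => u ≤ i.val) :=
        Finset.filter_congr (fun x _ => by omega)
      rw [heq] at h
      exact h
    have hps2 : SchubAux.pre (C \ S) u +
        ((C \ S).filter (fun i : Fin n => u ≤ i.val)).card = (C \ S).card := by
      have h := Finset.card_filter_add_card_filter_not (s := C \ S)
        (fun i : Fin n => i.val < u)
      have heq : (C \ S).filter (fun i : Fin n => ¬ i.val < u) =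
          (C \ S).filter (fun i : Fin n => u ≤ i.val) :=
        Finset.filter_congr (fun x _ => by omega)
      rw [heq] at h
      exact h
    omega
  · set B : Finset (Fin n) := (C \ Y) ∪ X with hBdef
    have hXC : ∀ x ∈ X, x ∉ C := fun x hx => (Finset.mem_sdiff.mp (hXS hx)).2
    have hYC : Y ⊆ C := fun y hy => (Finset.mem_sdiff.mp (hYS hy)).1
    have hdisj : Disjoint (C \ Y) X := by
      rw [Finset.disjoint_right]
      intro x hx hx2
      exact hXC x hx (Finset.mem_sdiff.mp hx2).1
    have hcard : B.card = C.card := by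
      rw [hBdef, Finset.card_union_of_disjoint hdisj, Finset.card_sdiff_of_subset hYC]
      have := Finset.card_le_card hYC
      omega
    have hdom : SchubertDom B C := by
      rw [SchubAux.schubertDom_iff]
      refine ⟨hcard, fun τ => ?_⟩
      have e1 : B.filter (· ≤ τ) = (C \ Y).filter (· ≤ τ) ∪ X.filter (· ≤ τ) := by
        rw [hBdef, Finset.filter_union]
      have e2 : (C \ Y).filter (· ≤ τ) = C.filter (· ≤ τ) \ Y.filter (· ≤ τ) := by
        ext x
        simp only [Finset.mem_filter, Finset.mem_sdiff]
        tauto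
      have e3 : (Y.filter (· ≤ τ)).card ≤ (X.filter (· ≤ τ)).card := by
        have e4 : Y.filter (· ≤ τ) = Y.filter (fun i => i.val ≤ τ.val) :=
          Finset.filter_congr (fun x _ => by rw [Fin.le_def])
        have e5 : X.filter (· ≤ τ) = X.filter (fun i => i.val ≤ τ.val) :=
          Finset.filter_congr (fun x _ => by rw [Fin.le_def])
        rw [e4, e5]
        exact h4 τ.val
      have e6 : Y.filter (· ≤ τ) ⊆ C.filter (· ≤ τ) :=
        Finset.filter_subset_filter _ hYC
      have e7 : (B.filter (· ≤ τ)).card =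
          ((C \ Y).filter (· ≤ τ)).card + (X.filter (· ≤ τ)).card := by
        rw [e1, Finset.card_union_of_disjoint (Finset.disjoint_filter_filter hdisj)]
      have e8 : ((C \ Y).filter (· ≤ τ)).card =
          (C.filter (· ≤ τ)).card - (Y.filter (· ≤ τ)).card := by
        rw [e2, Finset.card_sdiff_of_subset e6]
      have e9 := Finset.card_le_card e6
      omega
    have hmem : B ∈ (Finset.univ : Finset (Finset (Fin n))).filter
        (fun B => SchubertDom B C) := Finset.mem_filter.mpr ⟨Finset.mem_univ _, hdom⟩
    have hval : (C ∩ S).card + X.card ≤ (S ∩ B).card := by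
      have hsub : (C ∩ S) ∪ X ⊆ S ∩ B := by
        intro x hx
        rcases Finset.mem_union.mp hx with hx | hx
        · rw [Finset.mem_inter] at hx
          refine Finset.mem_inter.mpr ⟨hx.2,
            Finset.mem_union_left _ (Finset.mem_sdiff.mpr ⟨hx.1, ?_⟩)⟩
          intro hxY
          exact (Finset.mem_sdiff.mp (hYS hxY)).2 hx.2
        · exact Finset.mem_inter.mpr
            ⟨(Finset.mem_sdiff.mp (hXS hx)).1, Finset.mem_union_right _ hx⟩
      have hd : Disjoint (C ∩ S) X := by
        rw [Finset.disjoint_right]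
        intro x hx hx2
        exact hXC x hx (Finset.mem_inter.mp hx2).1
      calc (C ∩ S).card + X.card = ((C ∩ S) ∪ X).card :=
            (Finset.card_union_of_disjoint hd).symm
        _ ≤ (S ∩ B).card := Finset.card_le_card hsub
    calc thetaCol C S = (C ∩ S).card + X.card := by rw [hθ, h3]
      _ ≤ (S ∩ B).card := hval
      _ ≤ (Finset.univ.filter (fun B => SchubertDom B C)).sup (fun B => (S ∩ B).card) :=
          Finset.le_sup (f := fun B => (S ∩ B).card) hmem
end
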